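/- Let Ω⊂ℝ^n be a bounded domain with a C^∞(Ω̄) defining function ρ such that (1−|∇ρ|²)/ρ extends to a function in C^∞(Ω̄). Let a>0, b, c be real constants and s a positive integer with a s(s−1) + b s + c = 0, and let L = aρ²Δ + bρ∇ρ·∇ + c. Then for every ψ ∈ C^∞(Ω̄) there exist η_1, η_2 ∈ C^∞(Ω̄) such that L(ψρ^s log ρ) = η_1 ρ^{s+1} log ρ + η_2 in Ω. -/

import Mathlib

open Set Filter Topology

noncomputable section

abbrev En (n : ℕ) : Type := EuclideanSpace ℝ (Fin n)

variable {n : ℕ}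

/-- The partial derivative `∂ᵢ w` (computed with the full-space derivative). -/
noncomputable def pd (i : Fin n) (w : En n → ℝ) (x : En n) : ℝ :=
  fderiv ℝ w x (EuclideanSpace.single i 1)

/-- Iterated partial derivatives along a list of coordinate directions. -/
noncomputable def pdAll : List (Fin n) → (En n → ℝ) → En n → ℝ
  | [], w => w
  | i :: l, w => pd i (pdAll l w)

/-- Second-order partial derivative `∂ᵢ∂ⱼ w`. -/
noncomputable def pd2 (i j : Fin n) (w : En n → ℝ) : En n → ℝ := pd i (pd j w)

/-- The sup norm `|w|_{L^∞(E)}`. -/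
noncomputable def supNorm (E : Set (En n)) (w : En n → ℝ) : ℝ :=
  sSup ((fun x => |w x|) '' E)

/-- The Hölder seminorm `[w]_{C^β(E)}`. -/
noncomputable def holderSemi (β : ℝ) (E : Set (En n)) (w : En n → ℝ) : ℝ :=
  sSup ((fun p : En n × En n => |w p.1 - w p.2| / dist p.1 p.2 ^ β) '' (E ×ˢ E))

/-- The Hölder norm `|w|_{C^β(E)} = |w|_{L^∞(E)} + [w]_{C^β(E)}`. -/
noncomputable def holderNorm (β : ℝ) (E : Set (En n)) (w : En n → ℝ) : ℝ :=
  supNorm E w + holderSemi β E w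

/-- `w` is `β`-Hölder continuous on `E`. -/
def IsHolderOn (β : ℝ) (E : Set (En n)) (w : En n → ℝ) : Prop :=
  ∃ C : ℝ, ∀ x ∈ E, ∀ y ∈ E, |w x - w y| ≤ C * dist x y ^ β

/-- `w` is bounded on `E`. -/
def BoundedOn (E : Set (En n)) (w : En n → ℝ) : Prop :=
  ∃ M : ℝ, ∀ x ∈ E, |w x| ≤ M

/-- `w ∈ C^{k,β}(Ē)`: `w` is `C^k` in the open set `Ω`, all derivatives of order `≤ k`
extend continuously to the closure, and the order-`k` derivatives are `β`-Hölder. -/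
def MemHolderBar (k : ℕ) (β : ℝ) (Ω : Set (En n)) (w : En n → ℝ) : Prop :=
  ContinuousOn w (closure Ω) ∧ ContDiffOn ℝ k w Ω ∧
  (∀ l : List (Fin n), l.length ≤ k →
    ∃ g : En n → ℝ, ContinuousOn g (closure Ω) ∧ EqOn (pdAll l w) g Ω) ∧
  (∀ l : List (Fin n), l.length = k → IsHolderOn β Ω (pdAll l w))

/-- `w ∈ C^{k,β}(Ω)`: the interior Hölder class (Hölder on compact subsets). -/
def MemHolderLoc (k : ℕ) (β : ℝ) (Ω : Set (En n)) (w : En n → ℝ) : Prop :=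
  ContDiffOn ℝ k w Ω ∧
  ∀ K : Set (En n), K ⊆ Ω → IsCompact K →
    ∀ l : List (Fin n), l.length = k → IsHolderOn β K (pdAll l w)

/-- The norm `|w|_{C^{k,β}(Ē)}`. -/
noncomputable def holderNormCk (k : ℕ) (β : ℝ) (Ω : Set (En n)) (w : En n → ℝ) : ℝ :=
  (∑ i ∈ Finset.range (k + 1), ∑ v : Fin i → Fin n, supNorm Ω (pdAll (List.ofFn v) w)) +
  ∑ v : Fin k → Fin n, holderSemi β Ω (pdAll (List.ofFn v) w)

/-- The uniformly degenerate operator `L = ρ² a_{ij}∂_{ij} + ρ b_i ∂_i + c`. -/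
noncomputable def Lop (ρ : En n → ℝ) (a : Fin n → Fin n → En n → ℝ)
    (b : Fin n → En n → ℝ) (c : En n → ℝ) (w : En n → ℝ) (x : En n) : ℝ :=
  (ρ x) ^ 2 * ∑ i, ∑ j, a i j x * pd2 i j w x
    + ρ x * ∑ i, b i x * pd i w x + c x * w x

/-- Symmetry and uniform ellipticity `λ|ξ|² ≤ a_{ij}ξ_iξ_j ≤ Λ|ξ|²` on `E`. -/
def Elliptic (E : Set (En n)) (a : Fin n → Fin n → En n → ℝ) (lam Lam : ℝ) : Prop :=
  (∀ i j, ∀ x : En n, a i j x = a j i x) ∧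
  ∀ x ∈ E, ∀ ξ : Fin n → ℝ,
    lam * (∑ i, ξ i ^ 2) ≤ (∑ i, ∑ j, a i j x * ξ i * ξ j) ∧
    (∑ i, ∑ j, a i j x * ξ i * ξ j) ≤ Lam * (∑ i, ξ i ^ 2)

/-- The characteristic polynomial `P(μ) = μ(μ-1)a_{ij}ν_iν_j + μ b_iν_i + c`,
expressed through a function `ν` recording the boundary values of `∇ρ`. -/
def Pchar (a : Fin n → Fin n → En n → ℝ) (b : Fin n → En n → ℝ) (c : En n → ℝ)
    (ν : En n → Fin n → ℝ) (μ : ℝ) (x : En n) : ℝ :=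
  μ * (μ - 1) * (∑ i, ∑ j, a i j x * ν x i * ν x j) + μ * (∑ i, b i x * ν x i) + c x

/-- `ρ` is a defining function for `Ω`, with `ν` the continuous extension of `∇ρ`
to the closure, of unit length on the boundary. -/
def DefiningFn (Ω : Set (En n)) (ρ : En n → ℝ) (ν : En n → Fin n → ℝ) : Prop :=
  (∀ x ∈ Ω, 0 < ρ x) ∧ (∀ x ∈ frontier Ω, ρ x = 0) ∧
  ContinuousOn ρ (closure Ω) ∧ ContDiffOn ℝ 1 ρ Ω ∧
  (∀ i, ContinuousOn (fun x => ν x i) (closure Ω)) ∧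
  (∀ x ∈ Ω, ∀ i, ν x i = pd i ρ x) ∧
  (∀ x ∈ frontier Ω, (∑ i, (ν x i) ^ 2) = 1)

end

open Set Filter Topology

/-- `w ∈ C^∞(Ω̄)`: smooth in `Ω` with all derivatives extending continuously to `Ω̄`. -/
def SmoothBar {n : ℕ} (Ω : Set (En n)) (w : En n → ℝ) : Prop :=
  ContDiffOn ℝ (⊤ : ℕ∞) w Ω ∧
  ∀ l : List (Fin n), ∃ g : En n → ℝ,
    ContinuousOn g (closure Ω) ∧ EqOn (pdAll l w) g Ω

/-- The operator `L = aρ²Δ + bρ∇ρ·∇ + c` (with constant coefficients `a, b, c`). -/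
noncomputable def LopEx {n : ℕ} (ρ : En n → ℝ) (a b c : ℝ) (w : En n → ℝ) (x : En n) : ℝ :=
  a * (ρ x) ^ 2 * (∑ i, pd2 i i w x)
    + b * ρ x * (∑ i, pd i ρ x * pd i w x) + c * w x

section Helpers

variable {n : ℕ} {Ω : Set (En n)}

lemma pdAll_append (l : List (Fin n)) (j : Fin n) (w : En n → ℝ) :
    pdAll (l ++ [j]) w = pdAll l (pd j w) := by
  induction l with
  | nil => rfl
  | cons i l ih => simp [pdAll, ih]

lemma pd_congrOn (hΩ : IsOpen Ω) {f g : En n → ℝ} (h : Set.EqOn f g Ω) (i : Fin n) :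
    Set.EqOn (pd i f) (pd i g) Ω := fun x hx => by
  unfold pd
  rw [Filter.EventuallyEq.fderiv_eq (Filter.eventuallyEq_of_mem (hΩ.mem_nhds hx) h)]

lemma pdAll_congrOn (hΩ : IsOpen Ω) {f g : En n → ℝ} (h : Set.EqOn f g Ω) (l : List (Fin n)) :
    Set.EqOn (pdAll l f) (pdAll l g) Ω := by
  induction l with
  | nil => exact h
  | cons i l ih => exact pd_congrOn hΩ ih i

lemma contDiffOn_pd (hΩ : IsOpen Ω) {f : En n → ℝ} (hf : ContDiffOn ℝ (⊤ : ℕ∞) f Ω)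
    (i : Fin n) : ContDiffOn ℝ (⊤ : ℕ∞) (pd i f) Ω := by
  have h := hf.fderiv_of_isOpen (m := (⊤ : ℕ∞)) hΩ (by norm_num)
  exact h.clm_apply contDiffOn_const

lemma contDiffOn_pdAll (hΩ : IsOpen Ω) {f : En n → ℝ} (hf : ContDiffOn ℝ (⊤ : ℕ∞) f Ω)
    (l : List (Fin n)) : ContDiffOn ℝ (⊤ : ℕ∞) (pdAll l f) Ω := by
  induction l with
  | nil => exact hf
  | cons i l ih => exact contDiffOn_pd hΩ ih i

lemma diffAt_of (hΩ : IsOpen Ω) {f : En n → ℝ} (hf : ContDiffOn ℝ (⊤ : ℕ∞) f Ω)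
    {x : En n} (hx : x ∈ Ω) : DifferentiableAt ℝ f x :=
  ((hf x hx).contDiffAt (hΩ.mem_nhds hx)).differentiableAt (by simp)

lemma pd_eval {w : En n → ℝ} {D : En n →L[ℝ] ℝ} {x : En n} (h : HasFDerivAt w D x)
    (i : Fin n) : pd i w x = D (EuclideanSpace.single i 1) := by
  show fderiv ℝ w x _ = _
  rw [h.fderiv]

lemma pd_add {F G : En n → ℝ} {x : En n} (hF : DifferentiableAt ℝ F x)
    (hG : DifferentiableAt ℝ G x) (i : Fin n) :
    pd i (fun y => F y + G y) x = pd i F x + pd i G x := by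
  simp [pd, fderiv_fun_add hF hG]

lemma pd_mul {F G : En n → ℝ} {x : En n} (hF : DifferentiableAt ℝ F x)
    (hG : DifferentiableAt ℝ G x) (i : Fin n) :
    pd i (fun y => F y * G y) x = pd i F x * G x + F x * pd i G x := by
  simp [pd, fderiv_fun_mul hF hG]
  ring

lemma pdAll_add (hΩ : IsOpen Ω) {F G : En n → ℝ} (hF : ContDiffOn ℝ (⊤ : ℕ∞) F Ω)
    (hG : ContDiffOn ℝ (⊤ : ℕ∞) G Ω) (l : List (Fin n)) :
    Set.EqOn (pdAll l (fun y => F y + G y)) (fun y => pdAll l F y + pdAll l G y) Ω := by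
  induction l with
  | nil => intro x hx; rfl
  | cons i l ih =>
    intro x hx
    have e1 : pd i (pdAll l fun y => F y + G y) x
        = pd i (fun y => pdAll l F y + pdAll l G y) x := pd_congrOn hΩ ih i hx
    have dF : DifferentiableAt ℝ (pdAll l F) x := diffAt_of hΩ (contDiffOn_pdAll hΩ hF l) hx
    have dG : DifferentiableAt ℝ (pdAll l G) x := diffAt_of hΩ (contDiffOn_pdAll hΩ hG l) hx
    show pd i (pdAll l fun y => F y + G y) x = pd i (pdAll l F) x + pd i (pdAll l G) x
    rw [e1, pd_add dF dG i]

lemma SmoothBar.pd' (hΩ : IsOpen Ω) {f : En n → ℝ} (hf : SmoothBar Ω f) (i : Fin n) :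
    SmoothBar Ω (pd i f) := by
  refine ⟨contDiffOn_pd hΩ hf.1 i, fun l => ?_⟩
  obtain ⟨g, hg, he⟩ := hf.2 (l ++ [i])
  exact ⟨g, hg, by rw [← pdAll_append]; exact he⟩

lemma pdAll_const (c : ℝ) (l : List (Fin n)) :
    ∃ k : ℝ, pdAll l (fun _ : En n => c) = fun _ => k := by
  induction l with
  | nil => exact ⟨c, rfl⟩
  | cons i l ih =>
    obtain ⟨k, hk⟩ := ih
    refine ⟨0, ?_⟩
    show pd i (pdAll l fun _ => c) = _
    rw [hk]
    funext x
    simp [pd]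

lemma smoothBar_const (c : ℝ) : SmoothBar Ω (fun _ => c) := by
  refine ⟨contDiffOn_const, fun l => ?_⟩
  obtain ⟨k, hk⟩ := pdAll_const c l
  exact ⟨fun _ => k, continuousOn_const, by rw [hk]; exact fun x _ => rfl⟩

lemma smoothBar_add (hΩ : IsOpen Ω) {f g : En n → ℝ} (hf : SmoothBar Ω f)
    (hg : SmoothBar Ω g) : SmoothBar Ω (fun x => f x + g x) := by
  refine ⟨hf.1.add hg.1, fun l => ?_⟩
  obtain ⟨gf, cf, ef⟩ := hf.2 l
  obtain ⟨gg, cg, eg⟩ := hg.2 l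
  refine ⟨fun x => gf x + gg x, cf.add cg, fun x hx => ?_⟩
  rw [pdAll_add hΩ hf.1 hg.1 l hx]
  simp [ef hx, eg hx]

lemma smoothBar_mul (hΩ : IsOpen Ω) {f g : En n → ℝ} (hf : SmoothBar Ω f)
    (hg : SmoothBar Ω g) : SmoothBar Ω (fun x => f x * g x) := by
  have key : ∀ l : List (Fin n), ∀ f g : En n → ℝ, SmoothBar Ω f → SmoothBar Ω g →
      ∃ h, ContinuousOn h (closure Ω) ∧ Set.EqOn (pdAll l (fun x => f x * g x)) h Ω := by
    intro l
    induction l using List.reverseRecOn with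
    | nil =>
      intro f g hf hg
      obtain ⟨gf, cf, ef⟩ := hf.2 []
      obtain ⟨gg, cg, eg⟩ := hg.2 []
      exact ⟨fun x => gf x * gg x, cf.mul cg, fun x hx => by
        show f x * g x = gf x * gg x
        exact congrArg₂ (· * ·) (ef hx) (eg hx)⟩
    | append_singleton l j ih =>
      intro f g hf hg
      obtain ⟨h1, c1, e1⟩ := ih (pd j f) g (hf.pd' hΩ j) hg
      obtain ⟨h2, c2, e2⟩ := ih f (pd j g) hf (hg.pd' hΩ j)
      refine ⟨fun x => h1 x + h2 x, c1.add c2, fun x hx => ?_⟩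
      have hstep : Set.EqOn (pd j (fun x => f x * g x))
          (fun y => (fun y => pd j f y * g y) y + (fun y => f y * pd j g y) y) Ω := by
        intro y hy
        exact pd_mul (diffAt_of hΩ hf.1 hy) (diffAt_of hΩ hg.1 hy) j
      have e3 : pdAll (l ++ [j]) (fun x => f x * g x) x
          = pdAll l (pd j (fun x => f x * g x)) x := by rw [pdAll_append]
      rw [e3, pdAll_congrOn hΩ hstep l hx,
        pdAll_add hΩ ((contDiffOn_pd hΩ hf.1 j).mul hg.1)
          (hf.1.mul (contDiffOn_pd hΩ hg.1 j)) l hx]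
      exact congrArg₂ (· + ·) (e1 hx) (e2 hx)
  exact ⟨hf.1.mul hg.1, fun l => key l f g hf hg⟩

lemma smoothBar_sum (hΩ : IsOpen Ω) {ι : Type*} (t : Finset ι) (F : ι → En n → ℝ)
    (h : ∀ i ∈ t, SmoothBar Ω (F i)) : SmoothBar Ω (fun x => ∑ i ∈ t, F i x) := by
  induction t using Finset.cons_induction with
  | empty => simpa using smoothBar_const (0 : ℝ)
  | cons a t ha ih =>
    have e : (fun x => ∑ i ∈ Finset.cons a t ha, F i x)
        = fun x => F a x + ∑ i ∈ t, F i x := by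
      funext x; rw [Finset.sum_cons]
    rw [e]
    exact smoothBar_add hΩ (h a (Finset.mem_cons_self a t))
      (ih fun i hi => h i (Finset.mem_cons_of_mem hi))

lemma smoothBar_pow (hΩ : IsOpen Ω) {f : En n → ℝ} (hf : SmoothBar Ω f) (k : ℕ) :
    SmoothBar Ω (fun x => f x ^ k) := by
  induction k with
  | zero => simpa using smoothBar_const (1 : ℝ)
  | succ k ih =>
    have e : (fun x => f x ^ (k + 1)) = fun x => f x ^ k * f x := by
      funext x; rw [pow_succ]
    rw [e]
    exact smoothBar_mul hΩ ih hf

lemma smoothBar_cmul (hΩ : IsOpen Ω) {f : En n → ℝ} (c : ℝ) (hf : SmoothBar Ω f) :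
    SmoothBar Ω (fun x => c * f x) := smoothBar_mul hΩ (smoothBar_const c) hf

end Helpers

/-- **Case 2 of Example 2.1 (logarithmic factors)**: if `s` is a positive integer
root of `as(s-1)+bs+c = 0`, then `L(ψρˢ log ρ) = η₁ρ^{s+1} log ρ + η₂`. -/
theorem singular_logarithmic_factor
    {n : ℕ} (Ω : Set (En n)) (hΩo : IsOpen Ω) (hΩb : Bornology.IsBounded Ω)
    (hΩconn : IsConnected Ω)
    (ρ : En n → ℝ) (ν : En n → Fin n → ℝ)
    (hdef : DefiningFn Ω ρ ν) (hρ : SmoothBar Ω ρ)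
    (q : En n → ℝ) (hq : SmoothBar Ω q)
    (hq' : ∀ x ∈ Ω, 1 - (∑ i, (pd i ρ x) ^ 2) = ρ x * q x)
    (a b c : ℝ) (s : ℕ) (ha : 0 < a) (hs : 0 < s)
    (hroot : a * s * ((s : ℝ) - 1) + b * s + c = 0)
    (ψ : En n → ℝ) (hψ : SmoothBar Ω ψ) :
    ∃ η₁ η₂ : En n → ℝ, SmoothBar Ω η₁ ∧ SmoothBar Ω η₂ ∧
      ∀ x ∈ Ω,
        LopEx ρ a b c (fun y => ψ y * ρ y ^ s * Real.log (ρ y)) x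
        = η₁ x * ρ x ^ (s + 1) * Real.log (ρ x) + η₂ x := by
  obtain ⟨hρpos, -, -, -, -, -, -⟩ := hdef
  obtain ⟨m, rfl⟩ : ∃ m, s = m + 1 := ⟨s - 1, (Nat.succ_pred_eq_of_pos hs).symm⟩
  set A : Fin n → En n → ℝ := fun i x =>
    pd i ψ x * ρ x ^ (m + 1) + ((m : ℝ) + 1) * ψ x * (ρ x ^ m * pd i ρ x) with hAdef
  set B : Fin n → En n → ℝ := fun i x => ψ x * (ρ x ^ m * pd i ρ x) with hBdef
  -- smoothness of the building blocks
  have sbA : ∀ i, SmoothBar Ω (A i) := by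
    intro i
    show SmoothBar Ω (fun x =>
      pd i ψ x * ρ x ^ (m + 1) + ((m : ℝ) + 1) * ψ x * (ρ x ^ m * pd i ρ x))
    exact smoothBar_add hΩo
      (smoothBar_mul hΩo (hψ.pd' hΩo i) (smoothBar_pow hΩo hρ (m + 1)))
      (smoothBar_mul hΩo (smoothBar_cmul hΩo _ hψ)
        (smoothBar_mul hΩo (smoothBar_pow hΩo hρ m) (hρ.pd' hΩo i)))
  have sbB : ∀ i, SmoothBar Ω (B i) := by
    intro i
    show SmoothBar Ω (fun x => ψ x * (ρ x ^ m * pd i ρ x))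
    exact smoothBar_mul hΩo hψ
      (smoothBar_mul hΩo (smoothBar_pow hΩo hρ m) (hρ.pd' hΩo i))
  -- first derivatives
  have h1 : ∀ i : Fin n, Set.EqOn (pd i (fun y => ψ y * ρ y ^ (m + 1) * Real.log (ρ y)))
      (fun y => A i y * Real.log (ρ y) + B i y) Ω := by
    intro i y hy
    have hρd := (diffAt_of hΩo hρ.1 hy).hasFDerivAt
    have hψd := (diffAt_of hΩo hψ.1 hy).hasFDerivAt
    have hyne : ρ y ≠ 0 := ne_of_gt (hρpos y hy)
    have hpow : HasFDerivAt (fun z => ρ z ^ (m + 1))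
        ((((m : ℝ) + 1) * ρ y ^ m) • fderiv ℝ ρ y) y := by
      have h := (hasDerivAt_pow (m + 1) (ρ y)).comp_hasFDerivAt y hρd
      simp only [Function.comp_def, Nat.add_sub_cancel, Nat.cast_add, Nat.cast_one] at h
      exact h
    have hlog : HasFDerivAt (fun z => Real.log (ρ z)) ((ρ y)⁻¹ • fderiv ℝ ρ y) y := by
      have h := (Real.hasDerivAt_log hyne).comp_hasFDerivAt y hρd
      simpa [Function.comp_def] using h
    have hU := (hψd.mul hpow).mul hlog
    rw [pd_eval (w := fun y => ψ y * ρ y ^ (m + 1) * Real.log (ρ y)) hU i]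
    show _ = A i y * Real.log (ρ y) + B i y
    rw [hAdef, hBdef]
    simp only [ContinuousLinearMap.add_apply, ContinuousLinearMap.smul_apply, smul_eq_mul, pd,
      Pi.mul_apply]
    rw [pow_succ]
    field_simp
    ring
  have sum1 : SmoothBar Ω (fun x => ∑ i, pd2 i i ψ x) :=
    smoothBar_sum hΩo Finset.univ (fun i => pd2 i i ψ)
      (fun i _ => (hψ.pd' hΩo i).pd' hΩo i)
  have sum2 : SmoothBar Ω (fun x => ∑ i, pd i ψ x * pd i ρ x) :=
    smoothBar_sum hΩo Finset.univ (fun i => fun x => pd i ψ x * pd i ρ x)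
      (fun i _ => smoothBar_mul hΩo (hψ.pd' hΩo i) (hρ.pd' hΩo i))
  have sum3 : SmoothBar Ω (fun x => ∑ i, pd2 i i ρ x) :=
    smoothBar_sum hΩo Finset.univ (fun i => pd2 i i ρ)
      (fun i _ => (hρ.pd' hΩo i).pd' hΩo i)
  have sumA : SmoothBar Ω (fun x => ∑ i, A i x * pd i ρ x) :=
    smoothBar_sum hΩo Finset.univ (fun i => fun x => A i x * pd i ρ x)
      (fun i _ => smoothBar_mul hΩo (sbA i) (hρ.pd' hΩo i))
  have sumB : SmoothBar Ω (fun x => ∑ i, pd i (B i) x) :=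
    smoothBar_sum hΩo Finset.univ (fun i => pd i (B i))
      (fun i _ => (sbB i).pd' hΩo i)
  have sumB2 : SmoothBar Ω (fun x => ∑ i, pd i ρ x * B i x) :=
    smoothBar_sum hΩo Finset.univ (fun i => fun x => pd i ρ x * B i x)
      (fun i _ => smoothBar_mul hΩo (hρ.pd' hΩo i) (sbB i))
  refine ⟨fun x => a * (ρ x * (∑ i, pd2 i i ψ x)
        + 2 * ((m : ℝ) + 1) * (∑ i, pd i ψ x * pd i ρ x)
        + ((m : ℝ) + 1) * ψ x * (∑ i, pd2 i i ρ x))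
      + b * (∑ i, pd i ψ x * pd i ρ x) + c * (ψ x * q x),
    fun x => a * ρ x * (∑ i, A i x * pd i ρ x) + a * ρ x ^ 2 * (∑ i, pd i (B i) x)
      + b * ρ x * (∑ i, pd i ρ x * B i x), ?_, ?_, ?_⟩
  · exact smoothBar_add hΩo (smoothBar_add hΩo
      (smoothBar_cmul hΩo a (smoothBar_add hΩo (smoothBar_add hΩo
        (smoothBar_mul hΩo hρ sum1)
        (smoothBar_cmul hΩo (2 * ((m : ℝ) + 1)) sum2))
        (smoothBar_mul hΩo (smoothBar_cmul hΩo ((m : ℝ) + 1) hψ) sum3)))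
      (smoothBar_cmul hΩo b sum2))
      (smoothBar_cmul hΩo c (smoothBar_mul hΩo hψ hq))
  · exact smoothBar_add hΩo (smoothBar_add hΩo
      (smoothBar_mul hΩo (smoothBar_cmul hΩo a hρ) sumA)
      (smoothBar_mul hΩo (smoothBar_cmul hΩo a (smoothBar_pow hΩo hρ 2)) sumB))
      (smoothBar_mul hΩo (smoothBar_cmul hΩo b hρ) sumB2)
  · intro x hx
    have hne : ρ x ≠ 0 := ne_of_gt (hρpos x hx)
    have hS4 : ∑ i, (pd i ρ x) ^ 2 = 1 - ρ x * q x := by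
      have := hq' x hx; linarith
    have h2 : ∀ i : Fin n, pd2 i i (fun y => ψ y * ρ y ^ (m + 1) * Real.log (ρ y)) x
        = (ρ x ^ (m + 1) * Real.log (ρ x)) * pd2 i i ψ x
          + (2 * ((m : ℝ) + 1) * ρ x ^ m * Real.log (ρ x)) * (pd i ψ x * pd i ρ x)
          + (((m : ℝ) + 1) * (m : ℝ) * ψ x * ρ x ^ (m - 1) * Real.log (ρ x)) * (pd i ρ x) ^ 2
          + (((m : ℝ) + 1) * ψ x * ρ x ^ m * Real.log (ρ x)) * pd2 i i ρ x
          + (ρ x)⁻¹ * (A i x * pd i ρ x) + pd i (B i) x := by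
      intro i
      have e0 : pd2 i i (fun y => ψ y * ρ y ^ (m + 1) * Real.log (ρ y)) x
          = pd i (fun y => A i y * Real.log (ρ y) + B i y) x :=
        pd_congrOn hΩo (h1 i) i hx
      have hρd := (diffAt_of hΩo hρ.1 hx).hasFDerivAt
      have hψd := (diffAt_of hΩo hψ.1 hx).hasFDerivAt
      have hpρ := (diffAt_of hΩo (contDiffOn_pd hΩo hρ.1 i) hx).hasFDerivAt
      have hpψ := (diffAt_of hΩo (contDiffOn_pd hΩo hψ.1 i) hx).hasFDerivAt
      have hpowm : HasFDerivAt (fun z => ρ z ^ m)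
          (((m : ℝ) * ρ x ^ (m - 1)) • fderiv ℝ ρ x) x := by
        have h := (hasDerivAt_pow m (ρ x)).comp_hasFDerivAt x hρd
        simpa [Function.comp_def] using h
      have hpow : HasFDerivAt (fun z => ρ z ^ (m + 1))
          ((((m : ℝ) + 1) * ρ x ^ m) • fderiv ℝ ρ x) x := by
        have h := (hasDerivAt_pow (m + 1) (ρ x)).comp_hasFDerivAt x hρd
        simp only [Function.comp_def, Nat.add_sub_cancel, Nat.cast_add, Nat.cast_one] at h
        exact h
      have hlog : HasFDerivAt (fun z => Real.log (ρ z)) ((ρ x)⁻¹ • fderiv ℝ ρ x) x := by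
        have h := (Real.hasDerivAt_log hne).comp_hasFDerivAt x hρd
        simpa [Function.comp_def] using h
      have hA' : HasFDerivAt (A i)
          ((pd i ψ x • (((m : ℝ) + 1) * ρ x ^ m) • fderiv ℝ ρ x
              + ρ x ^ (m + 1) • fderiv ℝ (pd i ψ) x)
            + ((((m : ℝ) + 1) * ψ x) • (ρ x ^ m • fderiv ℝ (pd i ρ) x
                + pd i ρ x • ((m : ℝ) * ρ x ^ (m - 1)) • fderiv ℝ ρ x)
              + (ρ x ^ m * pd i ρ x) • (((m : ℝ) + 1) • fderiv ℝ ψ x))) x := by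
        rw [hAdef]
        exact (hpψ.mul hpow).add
          ((hψd.const_mul ((m : ℝ) + 1)).mul (hpowm.mul hpρ))
      have hB' : HasFDerivAt (B i)
          ((ψ x • (ρ x ^ m • fderiv ℝ (pd i ρ) x
              + pd i ρ x • ((m : ℝ) * ρ x ^ (m - 1)) • fderiv ℝ ρ x)
            + (ρ x ^ m * pd i ρ x) • fderiv ℝ ψ x)) x := by
        rw [hBdef]
        exact hψd.mul (hpowm.mul hpρ)
      rw [e0, pd_add (F := fun y => A i y * Real.log (ρ y)) (hA'.differentiableAt.mul hlog.differentiableAt)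
        hB'.differentiableAt i, pd_mul hA'.differentiableAt hlog.differentiableAt i,
        pd_eval hA' i, pd_eval hlog i]
      simp only [ContinuousLinearMap.add_apply, ContinuousLinearMap.smul_apply, smul_eq_mul,
        pd2, pd, hAdef]
      ring
    have hdrift : ∀ i : Fin n,
        pd i ρ x * pd i (fun y => ψ y * ρ y ^ (m + 1) * Real.log (ρ y)) x
        = Real.log (ρ x) * (A i x * pd i ρ x) + pd i ρ x * B i x := by
      intro i
      rw [h1 i hx]
      ring
    have hAP : ∑ i, A i x * pd i ρ x
        = ρ x ^ (m + 1) * (∑ i, pd i ψ x * pd i ρ x)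
          + ((m : ℝ) + 1) * ψ x * ρ x ^ m * (1 - ρ x * q x) := by
      have e : ∀ i ∈ Finset.univ, A i x * pd i ρ x
          = ρ x ^ (m + 1) * (pd i ψ x * pd i ρ x)
            + (((m : ℝ) + 1) * ψ x * ρ x ^ m) * (pd i ρ x) ^ 2 := by
        intro i _; rw [hAdef]; ring
      rw [Finset.sum_congr rfl e, Finset.sum_add_distrib, ← Finset.mul_sum,
        ← Finset.mul_sum, hS4]
    have hc2 : c = -(a * ((m : ℝ) + 1) * (m : ℝ) + b * ((m : ℝ) + 1)) := by
      push_cast at hroot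
      linear_combination hroot
    simp only [LopEx]
    rw [Finset.sum_congr rfl (fun i _ => h2 i),
      Finset.sum_congr rfl (fun i _ => hdrift i)]
    simp only [Finset.sum_add_distrib, ← Finset.mul_sum]
    rw [hS4, hAP, hc2]
    cases m with
    | zero =>
      norm_num
      field_simp
      ring
    | succ k =>
      simp only [Nat.add_sub_cancel]
      push_cast
      field_simp
      ring
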